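/- Let $A$ be a C*-algebra, let $x \in A$ be nonzero, and let $b \in A_+$. Then for any $\varepsilon > 0$, one has $(x b x^* - \varepsilon)_+ \precsim x (b - \varepsilon/\|x\|^2)_+ x^* \precsim (b - \varepsilon/\|x\|^2)_+$ in the Cuntz subequivalence order. -/

import Mathlib

open Filter Topology

/-- Cuntz subequivalence `a ≾ b` in a C*-algebra. -/
def CuntzLE {A : Type*} [NonUnitalCStarAlgebra A] (a b : A) : Prop :=
  ∃ v : ℕ → A, Tendsto (fun n => ‖a - v n * b * star (v n)‖) atTop (𝓝 0)

/-- The cut-down `(a - ε)₊` via continuous functional calculus with `t ↦ max (t - ε) 0`. -/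
noncomputable def posCut {A : Type*} [NonUnitalCStarAlgebra A] [PartialOrder A]
    [StarOrderedRing A] (a : A) (ε : ℝ) : A :=
  cfcₙ (fun t : ℝ => max (t - ε) 0) a

private lemma pointwise_bound {δ t : ℝ} (hδ : 0 < δ) (ht : 0 ≤ t) :
    |t - t*t/((δ+t)*(δ+t))*t - t*(t*t/((δ+t)*(δ+t))) +
      t*t/((δ+t)*(δ+t))*(t*(t*t/((δ+t)*(δ+t))))| ≤ δ := by
  have hd : 0 < δ + t := by linarith
  set P : ℝ := t*t/((δ+t)*(δ+t)) with hPdef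
  have hP : P * ((δ+t)*(δ+t)) = t*t := div_mul_cancel₀ _ (by positivity)
  have hP0 : 0 ≤ P := by positivity
  have h1 : (1-P)*((δ+t)*(δ+t)) = δ*(δ+2*t) := by linear_combination -hP
  have h3 : t*δ*(δ+2*t)^2 ≤ (δ+t)^4 := by
    nlinarith [sq_nonneg (δ - t), sq_nonneg (δ*t), sq_nonneg t, sq_nonneg δ,
      mul_nonneg ht hδ.le, sq_nonneg (δ + t), mul_nonneg (mul_nonneg ht ht) hδ.le]
  rw [abs_le]
  refine ⟨by nlinarith [mul_nonneg ht (sq_nonneg (1 - P))], ?_⟩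
  have hd4 : (0:ℝ) < (δ+t)^4 := by positivity
  rw [← mul_le_mul_iff_left₀ hd4]
  calc (t - P*t - t*P + P*(t*P)) * ((δ+t)^4)
      = t*((1-P)*((δ+t)*(δ+t)))^2 := by ring
    _ = δ*(t*δ*(δ+2*t)^2) := by rw [h1]; ring
    _ ≤ δ*((δ+t)^4) := by nlinarith [h3, hδ.le]

section CuntzHelpers

variable {A : Type*} [NonUnitalCStarAlgebra A] [PartialOrder A] [StarOrderedRing A]

private lemma my_smul_nonneg (r : ℝ) (hr : 0 ≤ r) {c : A} (hc : 0 ≤ c) : 0 ≤ r • c := by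
  have h1 : r • c = cfcₙ (fun t : ℝ => r * t) c := by
    have h2 : (fun t : ℝ => r * t) = fun t : ℝ => r • (id t : ℝ) := by ext t; simp
    rw [h2, cfcₙ_smul r id c, cfcₙ_id ℝ c (IsSelfAdjoint.of_nonneg hc)]
  rw [h1]
  exact cfcₙ_nonneg fun t ht => mul_nonneg hr (quasispectrum_nonneg_of_nonneg c hc t ht)

private lemma my_smul_le_smul {r s : ℝ} (hrs : r ≤ s) {c : A} (hc : 0 ≤ c) : r • c ≤ s • c := by
  have h := my_smul_nonneg (s - r) (by linarith) hc
  rw [sub_smul] at h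
  exact sub_nonneg.mp h

private lemma my_smul_mono {r : ℝ} (hr : 0 ≤ r) {c d : A} (h : c ≤ d) : r • c ≤ r • d := by
  have h2 := my_smul_nonneg r hr (sub_nonneg.mpr h)
  rw [smul_sub] at h2
  exact sub_nonneg.mp h2

omit [PartialOrder A] [StarOrderedRing A] in
private lemma cuntzLE_of_forall {a b : A}
    (h : ∀ η : ℝ, 0 < η → ∃ v : A, ‖a - v * b * star v‖ ≤ η) : CuntzLE a b := by
  choose v hv using fun n : ℕ => h (1 / (n + 1)) (by positivity)
  exact ⟨v, squeeze_zero (fun n => norm_nonneg _) hv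
    tendsto_one_div_add_atTop_nhds_zero_nat⟩

set_option maxHeartbeats 1000000 in
/-- Rørdam's lemma: if `0 ≤ z ≤ w` then `z` can be approximated by `v w v*`. -/
private lemma cuntz_aux {z w : A} (hz : 0 ≤ z) (hzw : z ≤ w) {η : ℝ} (hη : 0 < η) :
    ∃ v : A, ‖z - v * w * star v‖ ≤ η := by
  have hw : 0 ≤ w := hz.trans hzw
  have hw_sa : IsSelfAdjoint w := .of_nonneg hw
  set sz := CFC.sqrt z with hszdef
  have hsz : sz * sz = z := CFC.sqrt_mul_sqrt_self z hz
  have hsz0 : 0 ≤ sz := CFC.sqrt_nonneg _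
  have hsz_sa : IsSelfAdjoint sz := .of_nonneg hsz0
  obtain ⟨c, hc, hcval⟩ : ∃ c : ℝ, 0 < c ∧ c = η / (‖sz‖ + 1) :=
    ⟨_, by positivity, rfl⟩
  obtain ⟨δ, hδ, hδval⟩ : ∃ δ : ℝ, 0 < δ ∧ δ = c ^ 2 := ⟨_, by positivity, rfl⟩
  set s : ℝ → ℝ := fun t => Real.sqrt t / (δ + max t 0) with hsdef
  have hs_cont : Continuous s := by
    apply Real.continuous_sqrt.div (by continuity)
    intro t
    have h0 : (0:ℝ) ≤ max t 0 := le_max_right t 0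
    positivity
  have hs0 : s 0 = 0 := by simp [hsdef]
  set K : ℝ → ℝ := fun t => s t * (t * s t) with hKdef
  have hK_cont : Continuous K := hs_cont.mul (continuous_id.mul hs_cont)
  have hK0 : K 0 = 0 := by simp [hKdef, hs0]
  set k := cfcₙ s w with hkdef
  set kk := cfcₙ K w with hkkdef
  have hk_sa : IsSelfAdjoint k := cfcₙ_predicate s w
  have hkk_sa : IsSelfAdjoint kk := cfcₙ_predicate K w
  have hid_cont : ContinuousOn (fun t : ℝ => t) (quasispectrum ℝ w) := continuous_id.continuousOn
  have hkk_eq : kk = k * (w * k) := by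
    rw [hkkdef, hKdef]
    rw [cfcₙ_mul s (fun t => t * s t) w hs_cont.continuousOn hs0
      ((continuous_id.mul hs_cont).continuousOn) (by simp [hs0])]
    rw [cfcₙ_mul (fun t : ℝ => t) s w hid_cont rfl hs_cont.continuousOn hs0]
    rw [cfcₙ_id' ℝ w hw_sa]
  have c1 : cfcₙ (fun t => K t * t) w = kk * w := by
    rw [cfcₙ_mul K (fun t : ℝ => t) w hK_cont.continuousOn hK0 hid_cont rfl, cfcₙ_id' ℝ w hw_sa]
  have c2 : cfcₙ (fun t => t * K t) w = w * kk := by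
    rw [cfcₙ_mul (fun t : ℝ => t) K w hid_cont rfl hK_cont.continuousOn hK0, cfcₙ_id' ℝ w hw_sa]
  have c3 : cfcₙ (fun t => K t * (t * K t)) w = kk * (w * kk) := by
    rw [cfcₙ_mul K (fun t => t * K t) w hK_cont.continuousOn hK0
      ((continuous_id.mul hK_cont).continuousOn) (by simp [hK0])]
    rw [cfcₙ_mul (fun t : ℝ => t) K w hid_cont rfl hK_cont.continuousOn hK0, cfcₙ_id' ℝ w hw_sa]
  have c4 : cfcₙ (fun t => t - K t * t - t * K t + K t * (t * K t)) w
      = w - kk * w - w * kk + kk * (w * kk) := by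
    rw [cfcₙ_add (fun t => t - K t * t - t * K t) (fun t => K t * (t * K t)) w
      (by fun_prop) (by simp [hK0]) (by fun_prop) (by simp [hK0])]
    rw [cfcₙ_sub (fun t => t - K t * t) (fun t => t * K t) w
      (by fun_prop) (by simp [hK0]) (by fun_prop) (by simp [hK0])]
    rw [cfcₙ_sub (fun t : ℝ => t) (fun t => K t * t) w hid_cont rfl (by fun_prop) (by simp [hK0])]
    rw [cfcₙ_id' ℝ w hw_sa, c1, c2, c3]
  have hbound : ‖w - kk * w - w * kk + kk * (w * kk)‖ ≤ δ := by
    rw [← c4]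
    apply norm_cfcₙ_le
    intro t ht
    have ht0 : 0 ≤ t := quasispectrum_nonneg_of_nonneg w hw t ht
    have hst : Real.sqrt t * Real.sqrt t = t := Real.mul_self_sqrt ht0
    have hK_eq : K t = t*t/((δ+t)*(δ+t)) := by
      simp only [hKdef, hsdef, max_eq_left ht0]
      have hd : δ + t ≠ 0 := by positivity
      field_simp
      linear_combination t * hst
    rw [Real.norm_eq_abs, hK_eq]
    exact pointwise_bound hδ ht0
  have sq_expand : ∀ uu : A, IsSelfAdjoint uu →
      star (uu - uu * kk) * (uu - uu * kk)
        = uu*uu - kk*(uu*uu) - (uu*uu)*kk + kk*((uu*uu)*kk) := by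
    intro uu huu
    rw [star_sub, star_mul, hkk_sa.star_eq, huu.star_eq]
    noncomm_ring
  set q := sz - sz * kk with hqdef
  have hqq : star q * q = z - kk*z - z*kk + kk*(z*kk) := by
    rw [hqdef, sq_expand sz hsz_sa, hsz]
  have hp : 0 ≤ w - z := sub_nonneg.mpr hzw
  set sp := CFC.sqrt (w - z) with hspdef
  have hsp : sp * sp = w - z := CFC.sqrt_mul_sqrt_self (w - z) hp
  have hsp_sa : IsSelfAdjoint sp := .of_nonneg (CFC.sqrt_nonneg _)
  have hq'q' : star (sp - sp * kk) * (sp - sp * kk)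
      = (w-z) - kk*(w-z) - (w-z)*kk + kk*((w-z)*kk) := by
    rw [sq_expand sp hsp_sa, hsp]
  have hle : star q * q ≤ w - kk * w - w * kk + kk * (w * kk) := by
    have h0 := star_mul_self_nonneg (sp - sp * kk)
    rw [hq'q'] at h0
    have hdiff : (w - kk * w - w * kk + kk * (w * kk)) - (z - kk*z - z*kk + kk*(z*kk))
        = (w-z) - kk*(w-z) - (w-z)*kk + kk*((w-z)*kk) := by noncomm_ring
    rw [hqq]
    exact sub_nonneg.mp (by rw [hdiff]; exact h0)
  have hqq0 : 0 ≤ star q * q := star_mul_self_nonneg q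
  have hnorm_qq : ‖star q * q‖ ≤ δ :=
    (CStarAlgebra.norm_le_norm_of_nonneg_of_le hqq0 hle).trans hbound
  have hq_norm : ‖q‖ ≤ c := by
    have h2 := CStarRing.norm_star_mul_self (x := q)
    nlinarith [norm_nonneg q, hc.le, hδval]
  refine ⟨sz * k, ?_⟩
  have hvwv : (sz * k) * w * star (sz * k) = sz * (kk * sz) := by
    rw [star_mul, hk_sa.star_eq, hsz_sa.star_eq, hkk_eq]
    simp only [mul_assoc]
  have hstarq : star q = sz - kk * sz := by
    rw [hqdef, star_sub, star_mul, hkk_sa.star_eq, hsz_sa.star_eq]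
  have hzv : z - sz * (kk * sz) = sz * star q := by
    rw [hstarq, mul_sub, hsz]
  rw [hvwv, hzv]
  calc ‖sz * star q‖ ≤ ‖sz‖ * ‖star q‖ := norm_mul_le _ _
    _ = ‖sz‖ * ‖q‖ := by rw [norm_star]
    _ ≤ ‖sz‖ * c := mul_le_mul_of_nonneg_left hq_norm (norm_nonneg sz)
    _ ≤ (‖sz‖ + 1) * c := by nlinarith [hc.le]
    _ = η := by rw [hcval]; field_simp

set_option maxHeartbeats 1000000 in
private lemma main_approx (x : A) (hx : x ≠ 0) (b : A) (hb : 0 ≤ b) (ε : ℝ) (hε : 0 < ε) :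
    ∀ η : ℝ, 0 < η → ∃ v : A,
      ‖posCut (x * b * star x) ε - v * (x * posCut b (ε / ‖x‖ ^ 2) * star x) * star v‖ ≤ η := by
  have hxn : (0:ℝ) < ‖x‖ := norm_pos_iff.mpr hx
  have hδ₀ : (0:ℝ) < ε / ‖x‖ ^ 2 := by positivity
  set δ₀ : ℝ := ε / ‖x‖ ^ 2 with hδ₀def
  set c := posCut b δ₀ with hcdef
  have hc_eq : c = cfcₙ (fun t : ℝ => max (t - δ₀) 0) b := hcdef.trans rfl
  have hc : 0 ≤ c := by
    rw [hc_eq]; exact cfcₙ_nonneg fun t _ => le_max_right _ _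
  set y := x * c * star x with hydef
  have hy : 0 ≤ y := star_right_conjugate_nonneg hc x
  set a := x * b * star x with hadef
  have ha : 0 ≤ a := star_right_conjugate_nonneg hb x
  have ha_sa : IsSelfAdjoint a := .of_nonneg ha
  have hb_sa : IsSelfAdjoint b := .of_nonneg hb
  have hpc_eq : posCut a ε = cfcₙ (fun t : ℝ => max (t - ε) 0) a := rfl
  -- the remainder r = b - c
  have hrdef : b - c = cfcₙ (fun t : ℝ => t - max (t - δ₀) 0) b := by
    rw [cfcₙ_sub (fun t : ℝ => t) (fun t : ℝ => max (t - δ₀) 0) b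
      continuous_id.continuousOn rfl (by fun_prop)
      (by show max (0 - δ₀) 0 = 0; rw [zero_sub, max_eq_right (neg_nonpos.mpr hδ₀.le)])]
    rw [cfcₙ_id' ℝ b hb_sa, hc_eq]
  have hr0 : 0 ≤ b - c := by
    rw [hrdef]
    refine cfcₙ_nonneg fun t ht => ?_
    have ht0 := quasispectrum_nonneg_of_nonneg b hb t ht
    rcases le_total t δ₀ with h | h
    · rw [max_eq_right (by linarith : t - δ₀ ≤ 0)]; linarith
    · rw [max_eq_left (by linarith : (0:ℝ) ≤ t - δ₀)]; linarith
  have hrnorm : ‖b - c‖ ≤ δ₀ := by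
    rw [hrdef]
    refine norm_cfcₙ_le fun t ht => ?_
    have ht0 := quasispectrum_nonneg_of_nonneg b hb t ht
    rw [Real.norm_eq_abs, abs_le]
    rcases le_total t δ₀ with h | h
    · rw [max_eq_right (by linarith : t - δ₀ ≤ 0)]; constructor <;> linarith
    · rw [max_eq_left (by linarith : (0:ℝ) ≤ t - δ₀)]; constructor <;> linarith
  intro η hη
  have hθ : (0:ℝ) < η / 2 := by positivity
  set θ : ℝ := η / 2 with hθdef
  set φ : ℝ → ℝ := fun t => min 1 (max (t - ε) 0 / θ) with hφdef
  have hφ_cont : Continuous φ :=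
    continuous_const.min (((continuous_id.sub continuous_const).max continuous_const).div_const θ)
  have hφ0 : φ 0 = 0 := by
    show min 1 (max (0 - ε) 0 / θ) = 0
    rw [zero_sub, max_eq_right (neg_nonpos.mpr hε.le), zero_div]
    exact min_eq_right zero_le_one
  have hφ_nonneg : ∀ t, 0 ≤ φ t := fun t =>
    le_min zero_le_one (div_nonneg (le_max_right _ _) hθ.le)
  have hφ_le_one : ∀ t, φ t ≤ 1 := fun t => min_le_left _ _
  have hφ_zero : ∀ t, t ≤ ε → φ t = 0 := by
    intro t h
    show min 1 (max (t - ε) 0 / θ) = 0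
    rw [max_eq_right (by linarith : t - ε ≤ 0), zero_div]
    exact min_eq_right zero_le_one
  have hφ_one : ∀ t, θ ≤ t - ε → φ t = 1 := by
    intro t h
    show min 1 (max (t - ε) 0 / θ) = 1
    rw [max_eq_left (by linarith : (0:ℝ) ≤ t - ε)]
    exact min_eq_left ((one_le_div hθ).mpr h)
  set e := cfcₙ φ a with hedef
  have he_sa : IsSelfAdjoint e := cfcₙ_predicate φ a
  set ψ : ℝ → ℝ := fun t => φ t * t * φ t - ε * (φ t * φ t) with hψdef
  have hψ_cont : Continuous ψ :=
    ((hφ_cont.mul continuous_id).mul hφ_cont).sub (continuous_const.mul (hφ_cont.mul hφ_cont))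
  have hψ0 : ψ 0 = 0 := by show φ 0 * 0 * φ 0 - ε * (φ 0 * φ 0) = 0; rw [hφ0]; ring
  set z := cfcₙ ψ a with hzdef
  have hz_eq : z = e * a * e - ε • (e * e) := by
    rw [hzdef, hψdef]
    rw [cfcₙ_sub (fun t => φ t * t * φ t) (fun t => ε * (φ t * φ t)) a
      (((hφ_cont.mul continuous_id).mul hφ_cont).continuousOn) (by simp [hφ0])
      ((continuous_const.mul (hφ_cont.mul hφ_cont)).continuousOn) (by simp [hφ0])]
    rw [cfcₙ_mul (fun t => φ t * t) φ a ((hφ_cont.mul continuous_id).continuousOn)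
      (by simp [hφ0]) hφ_cont.continuousOn hφ0]
    rw [cfcₙ_mul φ (fun t : ℝ => t) a hφ_cont.continuousOn hφ0 continuous_id.continuousOn rfl]
    rw [cfcₙ_id' ℝ a ha_sa]
    rw [show (fun t => ε * (φ t * φ t)) = (fun t => ε • (φ t * φ t)) from by
      funext t; rw [smul_eq_mul]]
    rw [cfcₙ_smul ε (fun t => φ t * φ t) a ((hφ_cont.mul hφ_cont).continuousOn) (by simp [hφ0])]
    rw [cfcₙ_mul φ φ a hφ_cont.continuousOn hφ0 hφ_cont.continuousOn hφ0]
  have hz0 : 0 ≤ z := by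
    refine cfcₙ_nonneg fun t _ => ?_
    show 0 ≤ φ t * t * φ t - ε * (φ t * φ t)
    rcases le_total t ε with h | h
    · rw [hφ_zero t h]; simp
    · nlinarith [mul_nonneg (mul_nonneg (hφ_nonneg t) (hφ_nonneg t)) (sub_nonneg.mpr h)]
  have happrox : ‖posCut a ε - z‖ ≤ θ := by
    have hsub : posCut a ε - z = cfcₙ (fun t => max (t - ε) 0 - ψ t) a := by
      rw [cfcₙ_sub (fun t : ℝ => max (t - ε) 0) ψ a (by fun_prop)
        (by show max (0 - ε) 0 = 0; rw [zero_sub, max_eq_right (neg_nonpos.mpr hε.le)])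
        hψ_cont.continuousOn hψ0]
      rw [hzdef, hpc_eq]
    rw [hsub]
    refine norm_cfcₙ_le fun t _ => ?_
    rw [Real.norm_eq_abs, abs_le]
    show -θ ≤ max (t - ε) 0 - (φ t * t * φ t - ε * (φ t * φ t)) ∧
      max (t - ε) 0 - (φ t * t * φ t - ε * (φ t * φ t)) ≤ θ
    rcases le_total t ε with h | h
    · rw [hφ_zero t h, max_eq_right (by linarith : t - ε ≤ 0)]
      constructor <;> nlinarith
    · rw [max_eq_left (by linarith : (0:ℝ) ≤ t - ε)]
      rcases le_total θ (t - ε) with h2 | h2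
      · rw [hφ_one t h2]; constructor <;> nlinarith
      · have h3 := hφ_nonneg t
        have h4 := hφ_le_one t
        have h5 : 0 ≤ (t - ε) * (φ t * φ t) :=
          mul_nonneg (by linarith) (mul_nonneg h3 h3)
        have h6 : (t - ε) * (φ t * φ t) ≤ t - ε := by
          nlinarith [mul_nonneg (by linarith : (0:ℝ) ≤ t - ε)
            (by nlinarith : (0:ℝ) ≤ 1 - φ t * φ t)]
        constructor <;> nlinarith
  -- the key inequality z ≤ e * y * e
  have hkey : z ≤ e * y * e := by
    set M := star (star x * e) * (b - c) * (star x * e) with hMdef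
    have m1 : M ≤ ‖b - c‖ • (star (star x * e) * (star x * e)) :=
      CStarAlgebra.star_left_conjugate_le_norm_smul (IsSelfAdjoint.of_nonneg hr0)
    have m2 : star (star x * e) * (star x * e) = star e * (x * star x) * e := by
      rw [star_mul, star_star]
      simp only [mul_assoc]
    have m3 : star e * (x * star x) * e ≤ ‖x * star x‖ • (star e * e) :=
      CStarAlgebra.star_left_conjugate_le_norm_smul (IsSelfAdjoint.of_nonneg (mul_star_self_nonneg x))
    have m4 : M ≤ (‖b - c‖ * ‖x * star x‖) • (star e * e) := by
      calc M ≤ ‖b - c‖ • (star e * (x * star x) * e) := by rw [← m2]; exact m1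
        _ ≤ ‖b - c‖ • (‖x * star x‖ • (star e * e)) :=
            my_smul_mono (norm_nonneg _) m3
        _ = (‖b - c‖ * ‖x * star x‖) • (star e * e) := (smul_smul _ _ _)
    have m5 : ‖b - c‖ * ‖x * star x‖ ≤ ε := by
      rw [CStarRing.norm_self_mul_star]
      calc ‖b - c‖ * (‖x‖ * ‖x‖) ≤ δ₀ * (‖x‖ * ‖x‖) := by nlinarith
        _ = ε := by rw [hδ₀def, pow_two, div_mul_cancel₀ _ (by positivity : ‖x‖ * ‖x‖ ≠ 0)]
    have m6 : M ≤ ε • (e * e) := by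
      calc M ≤ (‖b - c‖ * ‖x * star x‖) • (star e * e) := m4
        _ ≤ ε • (star e * e) := my_smul_le_smul m5 (star_mul_self_nonneg e)
        _ = ε • (e * e) := by rw [he_sa.star_eq]
    have expand : M = e * a * e - e * y * e := by
      rw [hMdef, star_mul, star_star, he_sa.star_eq, hadef, hydef]
      noncomm_ring
    have h7 : e * y * e - z = ε • (e * e) - M := by
      rw [hz_eq, expand]; abel
    have h0 : 0 ≤ e * y * e - z := by
      rw [h7]; exact sub_nonneg.mpr m6
    exact sub_nonneg.mp h0
  obtain ⟨u, hu⟩ := cuntz_aux hz0 hkey hθ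
  refine ⟨u * e, ?_⟩
  have hue : (u * e) * y * star (u * e) = u * (e * y * e) * star u := by
    rw [star_mul, he_sa.star_eq]
    simp only [mul_assoc]
  rw [hue]
  calc ‖posCut a ε - u * (e * y * e) * star u‖
      ≤ ‖posCut a ε - z‖ + ‖z - u * (e * y * e) * star u‖ := by
        have h5 := norm_add_le (posCut a ε - z) (z - u * (e * y * e) * star u)
        simpa using h5
    _ ≤ θ + θ := add_le_add happrox hu
    _ = η := by rw [hθdef]; ring

end CuntzHelpers

/-- For nonzero `x` and positive `b`:
`(x b x* - ε)₊ ≾ x (b - ε/‖x‖²)₊ x* ≾ (b - ε/‖x‖²)₊`. -/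
theorem stmt_1 {A : Type*} [NonUnitalCStarAlgebra A] [PartialOrder A] [StarOrderedRing A]
    (x : A) (hx : x ≠ 0) (b : A) (hb : 0 ≤ b) (ε : ℝ) (hε : 0 < ε) :
    CuntzLE (posCut (x * b * star x) ε) (x * posCut b (ε / ‖x‖ ^ 2) * star x) ∧
      CuntzLE (x * posCut b (ε / ‖x‖ ^ 2) * star x) (posCut b (ε / ‖x‖ ^ 2)) := by
  constructor
  · exact cuntzLE_of_forall (main_approx x hx b hb ε hε)
  · refine ⟨fun _ => x, ?_⟩
    simpa using (tendsto_const_nhds : Tendsto (fun _ : ℕ => (0:ℝ)) atTop (𝓝 0))
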